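/- Suppose the (n−1)×(n−1) real matrix τ is supported on 𝒥, i.e., τ_{jk} = 0 whenever j ∉ 𝒥 or k ∉ 𝒥. Then the n×n matrix I − τ^{(p)}_{(𝒥)} belongs to ⟨p⟩^+ if and only if all of the following entrywise inequalities hold: 0 ≤ I_{n−1} − τ ≤ 1; 0 ≤ τ 1_𝒥^- ≤ 1 (componentwise); 0 ≤ r_𝒥^- τ ≤ 1 (componentwise); and 0 ≤ r_𝒥^- τ 1_𝒥^- ≤ 1. -/

import Mathlib

open Matrix

/-- The ratio `r_j := p_j / p_n` for `j ∈ [n-1]`, with the state space `[n]` modeled as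
`Fin (m+1)`, the last state `n` as `Fin.last m`, and `[n-1]` as `Fin m` via `Fin.castSucc`. -/
noncomputable def r (m : ℕ) (p : Fin (m + 1) → ℝ) (j : Fin m) : ℝ :=
  p j.castSucc / p (Fin.last m)

/-- `1_𝒥^-`, the indicator (column) vector of `𝒥 ⊆ [n-1]` in `ℝ^{n-1}`. -/
def oneJ (m : ℕ) (𝒥 : Finset (Fin m)) : Fin m → ℝ :=
  fun j => if j ∈ 𝒥 then 1 else 0

/-- `r_𝒥^-`, the row vector in `ℝ^{n-1}` with `(r_𝒥^-)_j = r_j` for `j ∈ 𝒥`, `0` otherwise. -/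
noncomputable def rJ (m : ℕ) (p : Fin (m + 1) → ℝ) (𝒥 : Finset (Fin m)) : Fin m → ℝ :=
  fun j => if j ∈ 𝒥 then r m p j else 0

/-- The block matrix `τ^{(p)}_{(𝒥)}`: upper-left `(n-1) × (n-1)` block `τ`, first `n-1`
entries of the last column `−τ 1_𝒥^-`, first `n-1` entries of the last row `−r_𝒥^- τ`,
and `(n,n)` entry `r_𝒥^- τ 1_𝒥^-`. -/
noncomputable def tauExt (m : ℕ) (p : Fin (m + 1) → ℝ) (𝒥 : Finset (Fin m))
    (τ : Matrix (Fin m) (Fin m) ℝ) : Matrix (Fin (m + 1)) (Fin (m + 1)) ℝ :=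
  Matrix.of fun a b =>
    Fin.lastCases
      (Fin.lastCases (dotProduct (rJ m p 𝒥) (τ.mulVec (oneJ m 𝒥)))
        (fun b' => -(Matrix.vecMul (rJ m p 𝒥) τ b')) b)
      (fun a' => Fin.lastCases (-(τ.mulVec (oneJ m 𝒥) a')) (fun b' => τ a' b') b) a

/-- if `τ` is supported on `𝒥`, then `I − τ^{(p)}_{(𝒥)} ∈ ⟨p⟩⁺` iff
`0 ≤ I_{n−1} − τ ≤ 1` (entrywise), `0 ≤ τ 1_𝒥^- ≤ 1`, `0 ≤ r_𝒥^- τ ≤ 1`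
(componentwise), and `0 ≤ r_𝒥^- τ 1_𝒥^- ≤ 1`. -/
theorem stmt18 (m : ℕ) (hm : 1 ≤ m) (p : Fin (m + 1) → ℝ)
    (hp : ∀ a, 0 < p a) (hsum : ∑ a, p a = 1) (𝒥 : Finset (Fin m))
    (τ : Matrix (Fin m) (Fin m) ℝ)
    (hτ : ∀ j k : Fin m, (j ∉ 𝒥 ∨ k ∉ 𝒥) → τ j k = 0) :
    ((∀ a b, 0 ≤ ((1 : Matrix (Fin (m + 1)) (Fin (m + 1)) ℝ) - tauExt m p 𝒥 τ) a b) ∧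
      ((1 : Matrix (Fin (m + 1)) (Fin (m + 1)) ℝ) - tauExt m p 𝒥 τ).mulVec
        (fun _ => (1 : ℝ)) = (fun _ => (1 : ℝ)) ∧
      Matrix.vecMul p ((1 : Matrix (Fin (m + 1)) (Fin (m + 1)) ℝ) - tauExt m p 𝒥 τ) = p) ↔
    ((∀ j k : Fin m, 0 ≤ ((1 : Matrix (Fin m) (Fin m) ℝ) - τ) j k ∧
        ((1 : Matrix (Fin m) (Fin m) ℝ) - τ) j k ≤ 1) ∧
      (∀ j : Fin m, 0 ≤ τ.mulVec (oneJ m 𝒥) j ∧ τ.mulVec (oneJ m 𝒥) j ≤ 1) ∧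
      (∀ k : Fin m, 0 ≤ Matrix.vecMul (rJ m p 𝒥) τ k ∧ Matrix.vecMul (rJ m p 𝒥) τ k ≤ 1) ∧
      (0 ≤ dotProduct (rJ m p 𝒥) (τ.mulVec (oneJ m 𝒥)) ∧
        dotProduct (rJ m p 𝒥) (τ.mulVec (oneJ m 𝒥)) ≤ 1)) := by
  have hpl : (0:ℝ) < p (Fin.last m) := hp _
  set T := tauExt m p 𝒥 τ with hTdef
  have hTcc : ∀ a b : Fin m, T a.castSucc b.castSucc = τ a b := by
    intro a b; simp [hTdef, tauExt]
  have hTcl : ∀ a : Fin m, T a.castSucc (Fin.last m) = -(τ.mulVec (oneJ m 𝒥) a) := by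
    intro a; simp [hTdef, tauExt]
  have hTlc : ∀ b : Fin m, T (Fin.last m) b.castSucc = -(Matrix.vecMul (rJ m p 𝒥) τ b) := by
    intro b; simp [hTdef, tauExt]
  have hTll : T (Fin.last m) (Fin.last m)
      = dotProduct (rJ m p 𝒥) (τ.mulVec (oneJ m 𝒥)) := by
    simp [hTdef, tauExt]
  -- basic sums
  have hmv : ∀ j, τ.mulVec (oneJ m 𝒥) j = ∑ k ∈ 𝒥, τ j k := by
    intro j
    simp only [Matrix.mulVec, dotProduct, oneJ, mul_ite, mul_one, mul_zero]
    rw [Finset.sum_ite_mem, Finset.univ_inter]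
  have hvm : ∀ k, Matrix.vecMul (rJ m p 𝒥) τ k = ∑ j ∈ 𝒥, r m p j * τ j k := by
    intro k
    simp only [Matrix.vecMul, dotProduct, rJ, ite_mul, zero_mul]
    rw [Finset.sum_ite_mem, Finset.univ_inter]
  have hmv0 : ∀ j ∉ 𝒥, τ.mulVec (oneJ m 𝒥) j = 0 := by
    intro j hj; rw [hmv]
    exact Finset.sum_eq_zero fun k _ => hτ j k (Or.inl hj)
  have hvm0 : ∀ k ∉ 𝒥, Matrix.vecMul (rJ m p 𝒥) τ k = 0 := by
    intro k hk; rw [hvm]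
    exact Finset.sum_eq_zero fun j _ => by rw [hτ j k (Or.inr hk), mul_zero]
  have hmvfull : ∀ j, τ.mulVec (oneJ m 𝒥) j = ∑ k, τ j k := by
    intro j; rw [hmv]
    exact Finset.sum_subset (Finset.subset_univ _) fun k _ hk => hτ j k (Or.inr hk)
  have hdot : dotProduct (rJ m p 𝒥) (τ.mulVec (oneJ m 𝒥))
      = ∑ k, Matrix.vecMul (rJ m p 𝒥) τ k := by
    rw [dotProduct_mulVec]
    simp only [dotProduct, oneJ, mul_ite, mul_one, mul_zero]
    rw [Finset.sum_ite_mem, Finset.univ_inter]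
    exact Finset.sum_subset (Finset.subset_univ _) fun k _ hk => hvm0 k hk
  have hdotJ : dotProduct (rJ m p 𝒥) (τ.mulVec (oneJ m 𝒥))
      = ∑ k ∈ 𝒥, Matrix.vecMul (rJ m p 𝒥) τ k := by
    rw [hdot]
    exact (Finset.sum_subset (Finset.subset_univ _) fun k _ hk => hvm0 k hk).symm
  -- row sums of T are zero
  have hrowT : ∀ a, ∑ b, T a b = 0 := by
    intro a
    induction a using Fin.lastCases with
    | last =>
        rw [Fin.sum_univ_castSucc]
        simp only [hTlc, hTll]
        rw [hdot, Finset.sum_neg_distrib]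
        ring
    | cast a' =>
        rw [Fin.sum_univ_castSucc]
        simp only [hTcc, hTcl]
        rw [← hmvfull a']
        ring
  -- weighted column sums of T are zero
  have hprj : ∀ j ∈ 𝒥, p (Fin.last m) * r m p j = p j.castSucc := by
    intro j _; rw [r]; field_simp
  have hcolT : ∀ b, ∑ a, p a * T a b = 0 := by
    intro b
    induction b using Fin.lastCases with
    | last =>
        rw [Fin.sum_univ_castSucc]
        simp only [hTcl, hTll]
        have h1 : p (Fin.last m) * dotProduct (rJ m p 𝒥) (τ.mulVec (oneJ m 𝒥))
            = ∑ a, p a.castSucc * τ.mulVec (oneJ m 𝒥) a := by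
          simp only [dotProduct, Finset.mul_sum]
          refine Finset.sum_congr rfl fun j _ => ?_
          by_cases hj : j ∈ 𝒥
          · rw [rJ, if_pos hj, ← mul_assoc, hprj j hj]
          · rw [rJ, if_neg hj, hmv0 j hj]; ring
        rw [h1]
        simp only [mul_neg]
        rw [Finset.sum_neg_distrib]
        ring
    | cast b' =>
        rw [Fin.sum_univ_castSucc]
        simp only [hTcc, hTlc]
        have h1 : p (Fin.last m) * Matrix.vecMul (rJ m p 𝒥) τ b'
            = ∑ a, p a.castSucc * τ a b' := by
          simp only [Matrix.vecMul, dotProduct, Finset.mul_sum]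
          refine Finset.sum_congr rfl fun j _ => ?_
          by_cases hj : j ∈ 𝒥
          · rw [rJ, if_pos hj, ← mul_assoc, hprj j hj]
          · rw [rJ, if_neg hj, hτ j b' (Or.inl hj)]; ring
        rw [mul_neg, h1]
        ring
  -- the two equality conditions always hold
  have hmul : ((1 : Matrix (Fin (m + 1)) (Fin (m + 1)) ℝ) - T).mulVec
      (fun _ => (1 : ℝ)) = fun _ => (1 : ℝ) := by
    funext a
    simp only [Matrix.mulVec, dotProduct, Matrix.sub_apply, mul_one]
    rw [Finset.sum_sub_distrib, hrowT]
    simp [Matrix.one_apply]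
  have hvec : Matrix.vecMul p ((1 : Matrix (Fin (m + 1)) (Fin (m + 1)) ℝ) - T) = p := by
    funext b
    simp only [Matrix.vecMul, dotProduct, Matrix.sub_apply, mul_sub]
    rw [Finset.sum_sub_distrib, hcolT]
    simp [Matrix.one_apply, mul_ite]
  constructor
  · rintro ⟨L, -, -⟩
    have LA : ∀ j k : Fin m, 0 ≤ ((1 : Matrix (Fin m) (Fin m) ℝ) - τ) j k := by
      intro j k
      have := L j.castSucc k.castSucc
      simpa [Matrix.sub_apply, hTcc, Matrix.one_apply, Fin.castSucc_inj] using this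
    have LAoff : ∀ j k : Fin m, j ≠ k → τ j k ≤ 0 := by
      intro j k h
      have := LA j k
      simpa [Matrix.sub_apply, Matrix.one_apply, h] using this
    have LB : ∀ j, 0 ≤ τ.mulVec (oneJ m 𝒥) j := by
      intro j
      have := L j.castSucc (Fin.last m)
      simpa [Matrix.sub_apply, hTcl, Matrix.one_apply,
        (Fin.castSucc_lt_last j).ne] using this
    have LC : ∀ k, 0 ≤ Matrix.vecMul (rJ m p 𝒥) τ k := by
      intro k
      have := L (Fin.last m) k.castSucc
      simpa [Matrix.sub_apply, hTlc, Matrix.one_apply,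
        (Fin.castSucc_lt_last k).ne'] using this
    have LD : dotProduct (rJ m p 𝒥) (τ.mulVec (oneJ m 𝒥)) ≤ 1 := by
      have := L (Fin.last m) (Fin.last m)
      rw [Matrix.sub_apply, hTll, Matrix.one_apply_eq] at this
      linarith
    have hdiag1 : ∀ j, τ j j ≤ 1 := by
      intro j
      have := LA j j
      simp only [Matrix.sub_apply, Matrix.one_apply_eq] at this
      linarith
    have hdiag0 : ∀ j, 0 ≤ τ j j := by
      intro j
      by_cases hj : j ∈ 𝒥
      · have h1 : 0 ≤ ∑ k ∈ 𝒥, τ j k := by rw [← hmv]; exact LB j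
        have h2 : ∑ k ∈ 𝒥.erase j, τ j k ≤ 0 :=
          Finset.sum_nonpos fun k hk => LAoff j k (Finset.ne_of_mem_erase hk).symm
        have h3 : ∑ k ∈ 𝒥.erase j, τ j k + τ j j = ∑ k ∈ 𝒥, τ j k :=
          Finset.sum_erase_add 𝒥 _ hj
        linarith
      · rw [hτ j j (Or.inl hj)]
    refine ⟨?_, ?_, ?_, ?_⟩
    · intro j k
      refine ⟨LA j k, ?_⟩
      rcases eq_or_ne j k with rfl | hjk
      · simp only [Matrix.sub_apply, Matrix.one_apply_eq]
        linarith [hdiag0 j]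
      · simp only [Matrix.sub_apply, Matrix.one_apply_ne hjk]
        by_cases hj : j ∈ 𝒥
        · by_cases hk : k ∈ 𝒥
          · have h1 : 0 ≤ ∑ k' ∈ 𝒥, τ j k' := by rw [← hmv]; exact LB j
            have e1 : ∑ x ∈ 𝒥.erase k, τ j x + τ j k = ∑ x ∈ 𝒥, τ j x :=
              Finset.sum_erase_add 𝒥 _ hk
            have hj' : j ∈ 𝒥.erase k := Finset.mem_erase.mpr ⟨hjk, hj⟩
            have e2 : ∑ x ∈ (𝒥.erase k).erase j, τ j x + τ j j
                = ∑ x ∈ 𝒥.erase k, τ j x := Finset.sum_erase_add _ _ hj'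
            have e3 : ∑ x ∈ (𝒥.erase k).erase j, τ j x ≤ 0 :=
              Finset.sum_nonpos fun x hx =>
                LAoff j x (Finset.ne_of_mem_erase hx).symm
            have := hdiag1 j
            linarith
          · rw [hτ j k (Or.inr hk)]; linarith
        · rw [hτ j k (Or.inl hj)]; linarith
    · intro j
      refine ⟨LB j, ?_⟩
      by_cases hj : j ∈ 𝒥
      · rw [hmv]
        have e1 : ∑ x ∈ 𝒥.erase j, τ j x + τ j j = ∑ x ∈ 𝒥, τ j x :=
          Finset.sum_erase_add 𝒥 _ hj
        have e2 : ∑ x ∈ 𝒥.erase j, τ j x ≤ 0 :=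
          Finset.sum_nonpos fun x hx => LAoff j x (Finset.ne_of_mem_erase hx).symm
        have := hdiag1 j
        linarith
      · rw [hmv0 j hj]; norm_num
    · intro k
      refine ⟨LC k, ?_⟩
      by_cases hk : k ∈ 𝒥
      · have h1 : Matrix.vecMul (rJ m p 𝒥) τ k
            ≤ ∑ k' ∈ 𝒥, Matrix.vecMul (rJ m p 𝒥) τ k' :=
          Finset.single_le_sum (fun i _ => LC i) hk
        rw [← hdotJ] at h1
        linarith
      · rw [hvm0 k hk]; norm_num
    · refine ⟨?_, LD⟩
      rw [hdot]
      exact Finset.sum_nonneg fun k _ => LC k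
  · rintro ⟨R1, R2, R3, R4⟩
    refine ⟨?_, hmul, hvec⟩
    intro a b
    induction a using Fin.lastCases with
    | last =>
        induction b using Fin.lastCases with
        | last =>
            rw [Matrix.sub_apply, hTll, Matrix.one_apply_eq]
            linarith [R4.2]
        | cast b' =>
            rw [Matrix.sub_apply, hTlc,
              Matrix.one_apply_ne (Fin.castSucc_lt_last b').ne']
            linarith [(R3 b').1]
    | cast a' =>
        induction b using Fin.lastCases with
        | last =>
            rw [Matrix.sub_apply, hTcl,
              Matrix.one_apply_ne (Fin.castSucc_lt_last a').ne]
            linarith [(R2 a').1]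
        | cast b' =>
            rw [Matrix.sub_apply, hTcc]
            have := (R1 a' b').1
            rw [Matrix.sub_apply] at this
            rcases eq_or_ne a' b' with rfl | h
            · simpa using this
            · rw [Matrix.one_apply_ne h] at this
              rw [Matrix.one_apply_ne (fun hc => h (Fin.castSucc_inj.mp hc))]
              exact this
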